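/- Let a, r, s ∈ ℕ and let n ≥ a(a+1)(r+2ar+3s)/6 be an integer. There exists a polynomial 𝒫_{a,r,s,n} ∈ ℚ[x] of degree exactly n − a(a+1)(r+2ar+3s)/6 such that d_{a,k,r,s}(n) = 𝒫_{a,r,s,n}(k) for every k ∈ ℤ. -/

import Mathlib

open PowerSeries Finset
open scoped Classical

noncomputable section

/-- `(1 - q^n)^(-k)` in `ℚ⟦q⟧`, for `k : ℤ` (for negative `k` this is the
power `(1 - q^n)^{|k|}`). -/
def dFac (n : ℕ) (k : ℤ) : PowerSeries ℚ :=
  if 0 ≤ k then ((1 - (X : PowerSeries ℚ) ^ n)⁻¹) ^ k.toNat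
  else (1 - (X : PowerSeries ℚ) ^ n) ^ (-k).toNat

/-- Strictly increasing `a`-tuples `1 ≤ n₁ < n₂ < ⋯ < n_a ≤ N`. -/
def strictTuples (a N : ℕ) : Finset (Fin a → ℕ) :=
  (Fintype.piFinset fun _ : Fin a => Finset.Icc 1 N).filter fun f => StrictMono f

/-- The coefficient `d_{a,k,r,s}(N)` of `q^N` in
`ℬ_{a,k,r,s}(q) = Σ_{1≤n₁<⋯<n_a} q^{r(n₁²+⋯+n_a²)+s(n₁+⋯+n_a)} / ∏_j (1-q^{n_j})^k`.
Since `r, s ≥ 1`, tuples containing an entry `> N` contribute `0` to the coefficient of `q^N`,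
so the (q-adically convergent) infinite sum can be truncated to entries in `[1, N]`. -/
def Bcoeff (a : ℕ) (k : ℤ) (r s : ℕ) (N : ℕ) : ℚ :=
  ∑ f ∈ strictTuples a N,
    PowerSeries.coeff (R := ℚ) N
      ((X : PowerSeries ℚ) ^ (r * (∑ j, (f j) ^ 2) + s * ∑ j, f j) * ∏ j, dFac (f j) k)

namespace BAux

/-- `P_i(X) = X(X+1)⋯(X+i-1)/i!`. -/
def Ppoly (i : ℕ) : Polynomial ℚ := Polynomial.C ((Nat.factorial i : ℚ)⁻¹) * ascPochhammer ℚ i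

lemma Ppoly_zero : Ppoly 0 = 1 := by
  simp [Ppoly]

lemma Ppoly_natDegree (i : ℕ) : (Ppoly i).natDegree = i := by
  rw [Ppoly, Polynomial.natDegree_C_mul (by positivity), ascPochhammer_natDegree]

lemma Ppoly_coeff_nonneg (i d : ℕ) : 0 ≤ (Ppoly i).coeff d := by
  rw [Ppoly, Polynomial.coeff_C_mul]
  have h : ascPochhammer ℚ i = (ascPochhammer ℕ i).map (Nat.castRingHom ℚ) := by
    rw [ascPochhammer_map]
  rw [h, Polynomial.coeff_map]
  simp only [eq_natCast]
  positivity

lemma Ppoly_coeff_self (i : ℕ) : (Ppoly i).coeff i = (Nat.factorial i : ℚ)⁻¹ := by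
  rw [Ppoly, Polynomial.coeff_C_mul]
  have h1 : (ascPochhammer ℚ i).coeff i = 1 := by
    have := monic_ascPochhammer (S := ℚ) i
    have hd := ascPochhammer_natDegree (S := ℚ) i
    rw [Polynomial.Monic.def, Polynomial.leadingCoeff, hd] at this
    exact this
  rw [h1, mul_one]

lemma Ppoly_eval_nat (m i : ℕ) : (Ppoly i).eval (m : ℚ) = ((m + i - 1).choose i : ℚ) := by
  rw [Ppoly, Polynomial.eval_mul, Polynomial.eval_C, ← ascPochhammer_eval_cast,
    ascPochhammer_nat_eq_ascFactorial, Nat.ascFactorial_eq_factorial_mul_choose']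
  push_cast
  rw [← mul_assoc, inv_mul_cancel₀ (by positivity), one_mul]

lemma Ppoly_eval_neg_nat (m i : ℕ) :
    (Ppoly i).eval (-(m : ℚ)) = (-1) ^ i * (m.choose i : ℚ) := by
  rw [Ppoly, Polynomial.eval_mul, Polynomial.eval_C,
    ascPochhammer_eval_neg_eq_descPochhammer, descPochhammer_eval_eq_descFactorial,
    Nat.descFactorial_eq_factorial_mul_choose]
  push_cast
  ring_nf
  rw [mul_inv_cancel₀ (by positivity : (Nat.factorial i : ℚ) ≠ 0)]
  ring

/-- Geometric series `Σ_{t ∣ M} q^M`. -/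
def geom (t : ℕ) : PowerSeries ℚ := PowerSeries.mk fun M => if t ∣ M then 1 else 0

lemma geom_mul (t : ℕ) (ht : 1 ≤ t) : geom t * (1 - X ^ t) = 1 := by
  ext M
  rw [mul_sub, mul_one, map_sub, mul_comm, PowerSeries.coeff_X_pow_mul']
  rcases eq_or_ne M 0 with rfl | hM
  · rw [if_neg (by omega : ¬ t ≤ 0), sub_zero, geom, PowerSeries.coeff_mk,
      if_pos (dvd_zero t), PowerSeries.coeff_one, if_pos rfl]
  · rw [PowerSeries.coeff_one, if_neg hM, geom, PowerSeries.coeff_mk]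
    by_cases hle : t ≤ M
    · rw [if_pos hle, PowerSeries.coeff_mk]
      have : t ∣ M ↔ t ∣ M - t := by
        constructor
        · intro h; exact (Nat.dvd_sub h dvd_rfl)
        · intro h; have := Nat.dvd_add h (dvd_refl t); rwa [Nat.sub_add_cancel hle] at this
      by_cases hd : t ∣ M
      · rw [if_pos hd, if_pos (this.mp hd), sub_self]
      · rw [if_neg hd, if_neg (fun hc => hd (this.mpr hc)), sub_self]
    · rw [if_neg hle, sub_zero, if_neg, ]
      intro hd
      rcases hd with ⟨c, rfl⟩
      rcases Nat.eq_zero_or_pos c with rfl | hc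
      · simp at hM
      · exact hle (Nat.le_mul_of_pos_right t hc)

lemma inv_one_sub_X_pow (t : ℕ) (ht : 1 ≤ t) :
    (1 - (X : PowerSeries ℚ) ^ t)⁻¹ = geom t := by
  rw [PowerSeries.inv_eq_iff_mul_eq_one]
  · exact geom_mul t ht
  · rw [map_sub, map_one, map_pow, constantCoeff_X]
    simp [zero_pow (by omega : t ≠ 0)]

lemma hockey (m u : ℕ) :
    ∑ v ∈ range (u + 1), (m + v - 1).choose v = (m + u).choose u := by
  induction u with
  | zero => simp
  | succ u ih =>
    rw [Finset.sum_range_succ, ih]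
    have h1 : m + (u + 1) - 1 = m + u := by omega
    rw [h1, ← Nat.choose_succ_succ' (m + u) u]
    congr 1

lemma coeff_geom_pow (t : ℕ) (ht : 1 ≤ t) (m M : ℕ) :
    PowerSeries.coeff (R := ℚ) M (geom t ^ m) =
      if t ∣ M then ((m + M / t - 1).choose (M / t) : ℚ) else 0 := by
  induction m generalizing M with
  | zero =>
    rw [pow_zero, PowerSeries.coeff_one]
    rcases eq_or_ne M 0 with rfl | hM
    · simp
    · rw [if_neg hM]
      by_cases hd : t ∣ M
      · rw [if_pos hd]
        have h1 : 1 ≤ M / t := Nat.one_le_div_iff (by omega) |>.mpr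
            (Nat.le_of_dvd (Nat.pos_of_ne_zero hM) hd)
        rw [Nat.choose_eq_zero_of_lt (by omega)]
        simp
      · rw [if_neg hd]
  | succ m ih =>
    rw [pow_succ, PowerSeries.coeff_mul, Finset.Nat.sum_antidiagonal_eq_sum_range_succ_mk]
    by_cases hd : t ∣ M
    · rw [if_pos hd]
      obtain ⟨u, rfl⟩ := hd
      have key : ∀ i ∈ range (t * u + 1),
          PowerSeries.coeff (R := ℚ) i (geom t ^ m) * PowerSeries.coeff (R := ℚ) (t * u - i) (geom t) =
          if t ∣ i then ((m + i / t - 1).choose (i / t) : ℚ) else 0 := by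
        intro i hi
        rw [Finset.mem_range] at hi
        rw [ih, geom, PowerSeries.coeff_mk]
        by_cases hti : t ∣ i
        · rw [if_pos hti, if_pos (Nat.dvd_sub ⟨u, rfl⟩ hti), mul_one]
        · rw [if_neg hti, zero_mul]
      rw [Finset.sum_congr rfl key]
      have himg : (range (u + 1)).image (fun v => t * v) ⊆ range (t * u + 1) := by
        intro x hx
        simp only [Finset.mem_image, Finset.mem_range] at hx ⊢
        obtain ⟨v, hv, rfl⟩ := hx
        have : v ≤ u := by omega
        have := Nat.mul_le_mul_left t this
        omega
      rw [← Finset.sum_subset himg]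
      · rw [Finset.sum_image (fun a _ b _ h => by
          exact Nat.eq_of_mul_eq_mul_left (by omega) h)]
        have : ∀ v ∈ range (u + 1),
            (if t ∣ t * v then ((m + (t * v) / t - 1).choose ((t * v) / t) : ℚ) else 0) =
            ((m + v - 1).choose v : ℚ) := by
          intro v _
          rw [if_pos (Dvd.intro v rfl), Nat.mul_div_cancel_left v (by omega)]
        rw [Finset.sum_congr rfl this]
        rw [Nat.mul_div_cancel_left u (by omega : 0 < t)]
        rw [← Nat.cast_sum, hockey]
        have h2 : m + 1 + u - 1 = m + u := by omega
        rw [h2]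
      · intro x hx hnx
        rw [if_neg]
        intro hc
        apply hnx
        obtain ⟨v, rfl⟩ := hc
        simp only [Finset.mem_image, Finset.mem_range]
        refine ⟨v, ?_, rfl⟩
        rw [Finset.mem_range] at hx
        by_contra hv
        have hv' : u + 1 ≤ v := by omega
        have h4 := Nat.mul_le_mul_left t hv'
        have h3 : t * (u + 1) = t * u + t := by ring
        omega
    · rw [if_neg hd]
      apply Finset.sum_eq_zero
      intro i hi
      rw [Finset.mem_range] at hi
      rw [ih, geom, PowerSeries.coeff_mk]
      by_cases hti : t ∣ i
      · rw [if_pos hti, if_neg, mul_zero]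
        intro hc
        apply hd
        have := Nat.dvd_add hti hc
        rwa [Nat.add_sub_cancel' (by omega)] at this
      · rw [if_neg hti, zero_mul]

lemma coeff_dFac (t : ℕ) (ht : 1 ≤ t) (k : ℤ) (M : ℕ) :
    PowerSeries.coeff (R := ℚ) M (dFac t k) =
      if t ∣ M then (Ppoly (M / t)).eval (k : ℚ) else 0 := by
  rcases le_or_gt 0 k with hk | hk
  · rw [dFac, if_pos hk, inv_one_sub_X_pow t ht, coeff_geom_pow t ht]
    have hkc : (k : ℚ) = (k.toNat : ℚ) := by exact_mod_cast (Int.toNat_of_nonneg hk).symm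
    by_cases hd : t ∣ M
    · rw [if_pos hd, if_pos hd, hkc, Ppoly_eval_nat]
    · rw [if_neg hd, if_neg hd]
  · rw [dFac, if_neg (not_le.mpr hk)]
    set m := (-k).toNat with hm
    have hkc : (k : ℚ) = -(m : ℚ) := by
      have : ((-k).toNat : ℤ) = -k := Int.toNat_of_nonneg (by omega)
      have h2 : (((-k).toNat : ℕ) : ℚ) = ((-k : ℤ) : ℚ) := by
        rw [← this]
        norm_cast
      rw [hm, h2]
      push_cast
      ring
    have hexp : (1 - (X : PowerSeries ℚ) ^ t) ^ m =
        ∑ i ∈ range (m + 1), ((-1 : ℚ) ^ i * (m.choose i : ℚ)) • (X : PowerSeries ℚ) ^ (t * i) := by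
      have h0 : (1 - (X : PowerSeries ℚ) ^ t) = (-(X ^ t) + 1) := by ring
      rw [h0, add_pow]
      apply Finset.sum_congr rfl
      intro i _
      rw [neg_pow, one_pow, mul_one, pow_mul, smul_eq_C_mul, map_mul, map_pow, map_neg,
        map_one, map_natCast]
      ring
    rw [hexp, map_sum]
    have hterm : ∀ i ∈ range (m + 1),
        PowerSeries.coeff (R := ℚ) M (((-1 : ℚ) ^ i * (m.choose i : ℚ)) • (X : PowerSeries ℚ) ^ (t * i)) =
        if M = t * i then (-1 : ℚ) ^ i * (m.choose i : ℚ) else 0 := by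
      intro i _
      rw [PowerSeries.coeff_smul, PowerSeries.coeff_X_pow]
      split_ifs <;> simp
    rw [Finset.sum_congr rfl hterm]
    by_cases hd : t ∣ M
    · obtain ⟨u, rfl⟩ := hd
      have hiff : ∀ i ∈ range (m + 1),
          (if t * u = t * i then (-1 : ℚ) ^ i * (m.choose i : ℚ) else 0) =
          (if i = u then (-1 : ℚ) ^ i * (m.choose i : ℚ) else 0) := by
        intro i _
        congr 1
        simp only [eq_iff_iff]
        constructor
        · intro h; exact (Nat.eq_of_mul_eq_mul_left (by omega) h.symm)
        · intro h; rw [h]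
      rw [Finset.sum_congr rfl hiff, Finset.sum_ite_eq' (range (m + 1)) u,
        if_pos (dvd_mul_right t u), Nat.mul_div_cancel_left u (by omega : 0 < t), hkc,
        Ppoly_eval_neg_nat]
      by_cases hu : u ∈ range (m + 1)
      · rw [if_pos hu]
      · rw [if_neg hu]
        rw [Finset.mem_range] at hu
        rw [Nat.choose_eq_zero_of_lt (by omega)]
        simp
    · rw [if_neg hd]
      apply Finset.sum_eq_zero
      intro i _
      rw [if_neg]
      intro hc
      exact hd ⟨i, hc⟩

/-- The per-tuple polynomial. -/
def Qp {a : ℕ} (f : Fin a → ℕ) (l : Fin a →₀ ℕ) : Polynomial ℚ :=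
  ∏ j, if f j ∣ l j then Ppoly (l j / f j) else 0

/-- Exponent of the monomial attached to a tuple. -/
def Ef (r s : ℕ) {a : ℕ} (f : Fin a → ℕ) : ℕ :=
  r * (∑ j, (f j) ^ 2) + s * ∑ j, f j

/-- The interpolating polynomial. -/
def Pmain (a r s n : ℕ) : Polynomial ℚ :=
  ∑ f ∈ strictTuples a n,
    if Ef r s f ≤ n then
      ∑ l ∈ finsuppAntidiag (univ : Finset (Fin a)) (n - Ef r s f), Qp f l
    else 0

lemma coeff_prod_nonneg {ι : Type*} (s : Finset ι) (g : ι → Polynomial ℚ)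
    (h : ∀ i, ∀ d, 0 ≤ (g i).coeff d) : ∀ d, 0 ≤ (∏ i ∈ s, g i).coeff d := by
  induction s using Finset.cons_induction with
  | empty =>
    intro d
    rw [Finset.prod_empty, Polynomial.coeff_one]
    split_ifs <;> norm_num
  | cons i s his ih =>
    intro d
    rw [Finset.prod_cons, Polynomial.coeff_mul]
    apply Finset.sum_nonneg
    intro p _
    exact mul_nonneg (h i p.1) (ih p.2)

lemma Qp_coeff_nonneg {a : ℕ} (f : Fin a → ℕ) (l : Fin a →₀ ℕ) (d : ℕ) :
    0 ≤ (Qp f l).coeff d := by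
  apply coeff_prod_nonneg
  intro j e
  by_cases h : f j ∣ l j
  · rw [if_pos h]; exact Ppoly_coeff_nonneg _ _
  · rw [if_neg h]; simp

lemma sum_range_lin (a : ℕ) : 2 * ∑ j ∈ range a, (j + 1) = a * (a + 1) := by
  induction a with
  | zero => simp
  | succ a ih => rw [Finset.sum_range_succ, Nat.mul_add, ih]; ring

lemma sum_range_sq (a : ℕ) : 6 * ∑ j ∈ range a, (j + 1) ^ 2 = a * (a + 1) * (2 * a + 1) := by
  induction a with
  | zero => simp
  | succ a ih => rw [Finset.sum_range_succ, Nat.mul_add, ih]; ring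

end BAux

open BAux

/-- Corollary 1.4, `ℬ`-part.  For `a, r, s ∈ ℕ` (positive) and
`n ≥ a(a+1)(r+2ar+3s)/6`, there is a polynomial `𝒫_{a,r,s,n}` of degree exactly
`n - a(a+1)(r+2ar+3s)/6` such that `d_{a,k,r,s}(n) = 𝒫_{a,r,s,n}(k)` for every `k ∈ ℤ`. -/
theorem B_coeff_is_polynomial_in_k (a r s : ℕ) (ha : 1 ≤ a) (hr : 1 ≤ r) (hs : 1 ≤ s)
    (n : ℕ) (hn : a * (a + 1) * (r + 2 * a * r + 3 * s) / 6 ≤ n) :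
    ∃ P : Polynomial ℚ,
      P.degree = ((n - a * (a + 1) * (r + 2 * a * r + 3 * s) / 6 : ℕ) : WithBot ℕ) ∧
      ∀ k : ℤ, Bcoeff a k r s n = P.eval (k : ℚ) := by
  classical
  set m₀ := a * (a + 1) * (r + 2 * a * r + 3 * s) / 6 with hm₀def
  -- the minimal tuple
  set f₀ : Fin a → ℕ := fun j => (j : ℕ) + 1 with hf₀
  have hsumL : ∑ j : Fin a, f₀ j = ∑ j ∈ range a, (j + 1) :=
    Fin.sum_univ_eq_sum_range (fun j => j + 1) a
  have hsumQ : ∑ j : Fin a, (f₀ j) ^ 2 = ∑ j ∈ range a, (j + 1) ^ 2 :=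
    Fin.sum_univ_eq_sum_range (fun j => (j + 1) ^ 2) a
  have hEf₀ : Ef r s f₀ = m₀ := by
    have h6 : 6 * Ef r s f₀ = a * (a + 1) * (r + 2 * a * r + 3 * s) := by
      rw [Ef, hsumL, hsumQ]
      have h1 := sum_range_lin a
      have h2 := sum_range_sq a
      calc 6 * (r * (∑ j ∈ range a, (j + 1) ^ 2) + s * ∑ j ∈ range a, (j + 1))
          = r * (6 * ∑ j ∈ range a, (j + 1) ^ 2) + 3 * s * (2 * ∑ j ∈ range a, (j + 1)) := by
            ring
        _ = r * (a * (a + 1) * (2 * a + 1)) + 3 * s * (a * (a + 1)) := by rw [h1, h2]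
        _ = a * (a + 1) * (r + 2 * a * r + 3 * s) := by ring
    rw [hm₀def, ← h6, Nat.mul_div_cancel_left _ (by norm_num : 0 < 6)]
  have hm₀n : m₀ ≤ n := hn
  have hLa : a ≤ ∑ j ∈ range a, (j + 1) := by
    calc a = ∑ _j ∈ range a, 1 := by simp
      _ ≤ ∑ j ∈ range a, (j + 1) := Finset.sum_le_sum (fun j _ => by omega)
  have han : a ≤ n := by
    have h1 : a ≤ Ef r s f₀ := by
      rw [Ef, hsumL]
      calc a ≤ ∑ j ∈ range a, (j + 1) := hLa
        _ ≤ s * ∑ j ∈ range a, (j + 1) := Nat.le_mul_of_pos_left _ (by omega)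
        _ ≤ _ := Nat.le_add_left _ _
    omega
  have hf₀mem : f₀ ∈ strictTuples a n := by
    rw [strictTuples, Finset.mem_filter]
    constructor
    · rw [Fintype.mem_piFinset]
      intro j
      rw [Finset.mem_Icc]
      have h2 := j.2
      have h3 : f₀ j = (j : ℕ) + 1 := rfl
      omega
    · intro x y hxy
      have : (x : ℕ) < (y : ℕ) := hxy
      simp only [hf₀]
      omega
  -- entries of strict tuples are at least 1 and grow at least linearly
  have hmem1 : ∀ f ∈ strictTuples a n, ∀ j : Fin a, 1 ≤ f j ∧ f j ≤ n := by
    intro f hf j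
    rw [strictTuples, Finset.mem_filter, Fintype.mem_piFinset] at hf
    have := hf.1 j
    rw [Finset.mem_Icc] at this
    exact this
  have hlower : ∀ f ∈ strictTuples a n, ∀ j : Fin a, (j : ℕ) + 1 ≤ f j := by
    intro f hf
    have hmono : StrictMono f := by
      rw [strictTuples, Finset.mem_filter] at hf
      exact hf.2
    have key : ∀ v, ∀ hv : v < a, v + 1 ≤ f ⟨v, hv⟩ := by
      intro v
      induction v with
      | zero => intro hv; exact (hmem1 f hf ⟨0, hv⟩).1
      | succ v ih =>
        intro hv
        have hv' : v < a := by omega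
        have h1 : f ⟨v, hv'⟩ < f ⟨v + 1, hv⟩ := hmono (by simp [Fin.lt_def])
        have h2 := ih hv'
        omega
    intro j
    have := key j.1 j.2
    simpa using this
  have hElb : ∀ f ∈ strictTuples a n, m₀ ≤ Ef r s f := by
    intro f hf
    rw [← hEf₀, Ef, Ef]
    have hL : ∑ j : Fin a, f₀ j ≤ ∑ j : Fin a, f j :=
      Finset.sum_le_sum (fun j _ => hlower f hf j)
    have hQ : ∑ j : Fin a, (f₀ j) ^ 2 ≤ ∑ j : Fin a, (f j) ^ 2 :=
      Finset.sum_le_sum (fun j _ => Nat.pow_le_pow_left (hlower f hf j) 2)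
    exact Nat.add_le_add (Nat.mul_le_mul_left r hQ) (Nat.mul_le_mul_left s hL)
  refine ⟨Pmain a r s n, ?_, ?_⟩
  · -- degree statement
    have hub : (Pmain a r s n).degree ≤ ((n - m₀ : ℕ) : WithBot ℕ) := by
      rw [Pmain]
      apply (Polynomial.degree_sum_le _ _).trans
      apply Finset.sup_le
      intro f hf
      by_cases hEn : Ef r s f ≤ n
      · rw [if_pos hEn]
        apply (Polynomial.degree_sum_le _ _).trans
        apply Finset.sup_le
        intro l hl
        have hnd : (Qp f l).natDegree ≤ n - m₀ := by
          apply (Polynomial.natDegree_prod_le _ _).trans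
          rw [Finset.mem_finsuppAntidiag] at hl
          have hstep : ∀ j : Fin a,
              (if f j ∣ l j then Ppoly (l j / f j) else 0).natDegree ≤ l j := by
            intro j
            by_cases h : f j ∣ l j
            · rw [if_pos h, Ppoly_natDegree]; exact Nat.div_le_self _ _
            · rw [if_neg h]; simp
          calc ∑ j : Fin a, (if f j ∣ l j then Ppoly (l j / f j) else 0).natDegree
              ≤ ∑ j : Fin a, l j := Finset.sum_le_sum (fun j _ => hstep j)
            _ = n - Ef r s f := hl.1
            _ ≤ n - m₀ := Nat.sub_le_sub_left (hElb f hf) n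
        exact (Polynomial.degree_le_natDegree).trans (by exact_mod_cast hnd)
      · rw [if_neg hEn, Polynomial.degree_zero]
        exact bot_le
    -- positivity of the top coefficient
    set j0 : Fin a := ⟨0, ha⟩ with hj0
    set l₀ : Fin a →₀ ℕ := Finsupp.single j0 (n - m₀) with hl₀
    have hl₀sum : ∑ j : Fin a, l₀ j = n - m₀ := by
      rw [hl₀]
      rw [Finset.sum_eq_single j0]
      · simp
      · intro b _ hb
        exact Finsupp.single_eq_of_ne' (Ne.symm hb)
      · intro h
        exact absurd (Finset.mem_univ j0) h
    have hl₀mem : l₀ ∈ finsuppAntidiag (univ : Finset (Fin a)) (n - Ef r s f₀) := by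
      rw [Finset.mem_finsuppAntidiag]
      exact ⟨by rw [hEf₀]; exact hl₀sum, Finset.subset_univ _⟩
    have hQf₀ : Qp f₀ l₀ = Ppoly (n - m₀) := by
      rw [Qp]
      rw [Finset.prod_eq_single j0]
      · have h1 : f₀ j0 = 1 := by simp [hf₀, hj0]
        have h2 : l₀ j0 = n - m₀ := by simp [hl₀]
        rw [h1, h2, if_pos (one_dvd _), Nat.div_one]
      · intro b _ hb
        have h2 : l₀ b = 0 := Finsupp.single_eq_of_ne' (Ne.symm hb)
        rw [h2, if_pos (dvd_zero _), Nat.zero_div, Ppoly_zero]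
      · intro h
        exact absurd (Finset.mem_univ j0) h
    have hpos : 0 < (Pmain a r s n).coeff (n - m₀) := by
      rw [Pmain, Polynomial.finset_sum_coeff]
      have hterm_nonneg : ∀ f ∈ strictTuples a n, 0 ≤
          (if Ef r s f ≤ n then
            ∑ l ∈ finsuppAntidiag (univ : Finset (Fin a)) (n - Ef r s f), Qp f l
          else 0).coeff (n - m₀) := by
        intro f _
        by_cases hEn : Ef r s f ≤ n
        · rw [if_pos hEn, Polynomial.finset_sum_coeff]
          exact Finset.sum_nonneg (fun l _ => Qp_coeff_nonneg f l _)
        · rw [if_neg hEn]; simp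
      have hf₀term : 0 <
          (if Ef r s f₀ ≤ n then
            ∑ l ∈ finsuppAntidiag (univ : Finset (Fin a)) (n - Ef r s f₀), Qp f₀ l
          else 0).coeff (n - m₀) := by
        rw [if_pos (by omega : Ef r s f₀ ≤ n), Polynomial.finset_sum_coeff]
        have hmain : 0 < (Qp f₀ l₀).coeff (n - m₀) := by
          rw [hQf₀, Ppoly_coeff_self]
          positivity
        calc (0 : ℚ) < (Qp f₀ l₀).coeff (n - m₀) := hmain
          _ ≤ _ := Finset.single_le_sum
              (f := fun l => (Qp f₀ l).coeff (n - m₀))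
              (fun l _ => Qp_coeff_nonneg f₀ l _) hl₀mem
      calc (0 : ℚ) < _ := hf₀term
        _ ≤ _ := Finset.single_le_sum
            (f := fun f => (if Ef r s f ≤ n then
              ∑ l ∈ finsuppAntidiag (univ : Finset (Fin a)) (n - Ef r s f), Qp f l
            else 0).coeff (n - m₀)) hterm_nonneg hf₀mem
    exact le_antisymm hub (Polynomial.le_degree_of_ne_zero (ne_of_gt hpos))
  · -- evaluation statement
    intro k
    rw [Bcoeff, Pmain, Polynomial.eval_finset_sum]
    apply Finset.sum_congr rfl
    intro f hf
    rw [PowerSeries.coeff_X_pow_mul']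
    have hEdef : r * (∑ j, (f j) ^ 2) + s * ∑ j, f j = Ef r s f := rfl
    rw [hEdef]
    by_cases hEn : Ef r s f ≤ n
    · rw [if_pos hEn, if_pos hEn, PowerSeries.coeff_prod, Polynomial.eval_finset_sum]
      apply Finset.sum_congr rfl
      intro l hl
      rw [Qp, Polynomial.eval_prod]
      apply Finset.prod_congr rfl
      intro j _
      rw [coeff_dFac (f j) (hmem1 f hf j).1 k (l j)]
      rw [apply_ite (Polynomial.eval (k : ℚ))]
      simp
    · rw [if_neg hEn, if_neg hEn, Polynomial.eval_zero]

end
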